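/- Let α∈(0,1) and θ>0, and let (K_n,(K_{r,n})_{r≥1}) be the Ewens–Pitman block-counting chain with parameters (α,θ). Then for every real q with 0<q<1+θ/α, one has sup_{n≥1} E[(K_n/n^α)^{−q}] < ∞. -/

import Mathlib

open MeasureTheory ProbabilityTheory Filter Topology

noncomputable section

/-- Rising factorial `(a)^(m) = a (a+1) ⋯ (a+m-1)` of a real number. -/
def risingFactorial (a : ℝ) : ℕ → ℝ
  | 0 => 1
  | m + 1 => risingFactorial a m * (a + m)

/-- Sibuya probabilities `p_α(r) = α (1-α)^(r-1) / r!` for `r ≥ 1`. -/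
def sibuya (α : ℝ) (r : ℕ) : ℝ :=
  α * risingFactorial (1 - α) (r - 1) / (Nat.factorial r : ℝ)

/-- The Ewens–Pitman block-counting chain with parameters `(α, θ)` on a probability space
`(Ω, μ)` with filtration `F`: for `n ≥ 1`, `K n` is the number of blocks and `B r n` the
number of blocks of size `r` of the Ewens–Pitman random partition of `{1,…,n}`.
It starts from `K 1 = 1`, `B 1 1 = 1`, `B r 1 = 0` for `r ≥ 2`, and the transition from
time `n` to `n+1` creates a new block with conditional probability `(α K n + θ)/(n + θ)`,
and grows a block of size `r` to size `r+1` with conditional probability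
`(r - α) B r n / (n + θ)`. -/
structure IsEwensPitman (α θ : ℝ) {Ω : Type*} {mΩ : MeasurableSpace Ω}
    (μ : Measure Ω) (F : Filtration ℕ mΩ) (K : ℕ → Ω → ℕ) (B : ℕ → ℕ → Ω → ℕ) :
    Prop where
  prob : IsProbabilityMeasure μ
  meas_K : ∀ n, Measurable[F n] (K n)
  meas_B : ∀ r n, Measurable[F n] (B r n)
  init_K : ∀ᵐ ω ∂μ, K 1 ω = 1
  init_B1 : ∀ᵐ ω ∂μ, B 1 1 ω = 1
  init_B : ∀ r, 2 ≤ r → ∀ᵐ ω ∂μ, B r 1 ω = 0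
  B_eq_zero : ∀ r n, n < r → ∀ᵐ ω ∂μ, B r n ω = 0
  sum_blocks : ∀ n, 1 ≤ n → ∀ᵐ ω ∂μ, K n ω = ∑ r ∈ Finset.Icc 1 n, B r n ω
  sum_sizes : ∀ n, 1 ≤ n → ∀ᵐ ω ∂μ, n = ∑ r ∈ Finset.Icc 1 n, r * B r n ω
  trans_new : ∀ n, 1 ≤ n →
    μ[Set.indicator {ω | K (n+1) ω = K n ω + 1 ∧ B 1 (n+1) ω = B 1 n ω + 1 ∧
        ∀ s, 2 ≤ s → B s (n+1) ω = B s n ω} (fun _ => (1:ℝ)) | F n]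
      =ᵐ[μ] fun ω => (α * (K n ω : ℝ) + θ) / ((n : ℝ) + θ)
  trans_grow : ∀ n, 1 ≤ n → ∀ r, 1 ≤ r →
    μ[Set.indicator {ω | K (n+1) ω = K n ω ∧ B r (n+1) ω + 1 = B r n ω ∧
        B (r+1) (n+1) ω = B (r+1) n ω + 1 ∧
        ∀ s, 1 ≤ s → s ≠ r → s ≠ r + 1 → B s (n+1) ω = B s n ω} (fun _ => (1:ℝ)) | F n]
      =ᵐ[μ] fun ω => (((r : ℝ) - α) * (B r n ω : ℝ)) / ((n : ℝ) + θ)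

lemma gamma_interp (x t : ℝ) (hx : 0 < x) (ht0 : 0 ≤ t) (ht1 : t ≤ 1) :
    Real.Gamma (x + t) ≤ Real.Gamma x * x ^ t := by
  have hx1 : (0:ℝ) < x + 1 := by linarith
  have h := Real.convexOn_log_Gamma.2 (Set.mem_Ioi.2 hx) (Set.mem_Ioi.2 hx1)
    (by linarith : (0:ℝ) ≤ 1 - t) ht0 (by ring)
  have hco : (1-t) • x + t • (x+1) = x + t := by simp [smul_eq_mul]; ring
  rw [hco] at h
  simp only [Function.comp_apply, smul_eq_mul] at h
  have hΓx : 0 < Real.Gamma x := Real.Gamma_pos_of_pos hx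
  have hΓxt : 0 < Real.Gamma (x + t) := Real.Gamma_pos_of_pos (by linarith)
  have hΓx1 : Real.Gamma (x + 1) = x * Real.Gamma x := Real.Gamma_add_one (ne_of_gt hx)
  have hlog : Real.log (Real.Gamma (x+t)) ≤ Real.log (Real.Gamma x * x ^ t) := by
    rw [Real.log_mul (ne_of_gt hΓx) (ne_of_gt (Real.rpow_pos_of_pos hx t)),
      Real.log_rpow hx]
    calc Real.log (Real.Gamma (x+t)) ≤ (1-t) * Real.log (Real.Gamma x)
          + t * Real.log (Real.Gamma (x+1)) := h
      _ = Real.log (Real.Gamma x) + t * Real.log x := by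
          rw [hΓx1, Real.log_mul (ne_of_gt hx) (ne_of_gt hΓx)]; ring
  have := Real.exp_le_exp.2 hlog
  rwa [Real.exp_log hΓxt, Real.exp_log (by positivity)] at this

lemma gamma_ratio_le_aux : ∀ (m : ℕ) (x t : ℝ), 0 < x → 0 ≤ t → t ≤ 1 →
    Real.Gamma (x + ((m:ℝ) + t)) ≤ Real.Gamma x * (x + ((m:ℝ) + t)) ^ ((m:ℝ) + t) := by
  intro m
  induction m with
  | zero =>
      intro x t hx ht0 ht1
      simp only [Nat.cast_zero, zero_add]
      calc Real.Gamma (x + t) ≤ Real.Gamma x * x ^ t := gamma_interp x t hx ht0 ht1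
        _ ≤ Real.Gamma x * (x + t) ^ t :=
            mul_le_mul_of_nonneg_left
              (Real.rpow_le_rpow hx.le (by linarith) ht0)
              (Real.Gamma_pos_of_pos hx).le
  | succ m ih =>
      intro x t hx ht0 ht1
      have hxmt : 0 < x + ((m:ℝ) + t) := by positivity
      have h2 : x + ((((m:ℕ)+1 : ℕ):ℝ) + t) = (x + ((m:ℝ) + t)) + 1 := by push_cast; ring
      have h3 : ((((m:ℕ)+1:ℕ)):ℝ) + t = ((m:ℝ)+t)+1 := by push_cast; ring
      rw [h2, h3, Real.Gamma_add_one (ne_of_gt hxmt)]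
      calc (x + ((m:ℝ)+t)) * Real.Gamma (x + ((m:ℝ)+t))
          ≤ (x + ((m:ℝ)+t)) * (Real.Gamma x * (x + ((m:ℝ) + t)) ^ ((m:ℝ) + t)) :=
            mul_le_mul_of_nonneg_left (ih x t hx ht0 ht1) hxmt.le
        _ = Real.Gamma x * ((x + ((m:ℝ) + t)) ^ ((m:ℝ) + t) * (x + ((m:ℝ)+t))) := by ring
        _ = Real.Gamma x * (x + ((m:ℝ) + t)) ^ (((m:ℝ) + t) + 1) := by
            rw [Real.rpow_add_one (ne_of_gt hxmt)]
        _ ≤ Real.Gamma x * ((x + ((m:ℝ)+t)) + 1) ^ (((m:ℝ) + t) + 1) := by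
            apply mul_le_mul_of_nonneg_left
              (Real.rpow_le_rpow hxmt.le (by linarith) (by linarith))
              (Real.Gamma_pos_of_pos hx).le

lemma gamma_ratio_le (x p : ℝ) (hx : 0 < x) (hp : 0 ≤ p) :
    Real.Gamma (x + p) ≤ Real.Gamma x * (x + p) ^ p := by
  set m : ℕ := ⌊p⌋₊ with hm
  have ht0 : 0 ≤ p - m := by
    have := Nat.floor_le hp; linarith
  have ht1 : p - m ≤ 1 := by
    have := Nat.lt_floor_add_one p; linarith
  have hsplit : p = (m:ℝ) + (p - m) := by ring
  have := gamma_ratio_le_aux m x (p - m) hx ht0 ht1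
  rwa [← hsplit] at this

set_option maxHeartbeats 1000000 in
theorem uniform_negative_moments (α θ : ℝ) (hα0 : 0 < α) (hα1 : α < 1) (hθ : 0 < θ)
    {Ω : Type*} [mΩ : MeasurableSpace Ω] (μ : Measure Ω) (F : Filtration ℕ mΩ)
    (K : ℕ → Ω → ℕ) (B : ℕ → ℕ → Ω → ℕ) (hEP : IsEwensPitman α θ μ F K B)
    (q : ℝ) (hq0 : 0 < q) (hq1 : q < 1 + θ / α) :
    ∃ C : ENNReal, C ≠ ⊤ ∧ ∀ n : ℕ, 1 ≤ n →
      ∫⁻ ω, ENNReal.ofReal (((K n ω : ℝ) / (n : ℝ) ^ α) ^ (-q)) ∂μ ≤ C := by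
  haveI : IsProbabilityMeasure μ := hEP.prob
  set c : ℝ := θ / α with hc_def
  have hc : 0 < c := div_pos hθ hα0
  have hαc : α * c = θ := by rw [hc_def]; field_simp
  have hqc : q < 1 + c := hq1
  have hβ : 0 < α * q := mul_pos hα0 hq0
  have hβθ : α * q < 1 + θ := by nlinarith
  -- the Gamma-ratio function
  set G : ℕ → ℝ := fun k => Real.Gamma ((k:ℝ) + c - q) / Real.Gamma ((k:ℝ) + c) with hG_def
  have hxpos : ∀ k : ℕ, 1 ≤ k → 0 < (k:ℝ) + c - q := by
    intro k hk
    have : (1:ℝ) ≤ (k:ℝ) := by exact_mod_cast hk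
    linarith
  have hkc : ∀ k : ℕ, 0 < (k:ℝ) + c := fun k => by positivity
  have hGpos : ∀ k, 1 ≤ k → 0 < G k := fun k hk =>
    div_pos (Real.Gamma_pos_of_pos (hxpos k hk)) (Real.Gamma_pos_of_pos (hkc k))
  have hGrec : ∀ k : ℕ, 1 ≤ k → G (k+1) * ((k:ℝ) + c) = G k * ((k:ℝ) + c - q) := by
    intro k hk
    have h1 : ((k+1:ℕ):ℝ) + c - q = ((k:ℝ)+c-q) + 1 := by push_cast; ring
    have h2 : ((k+1:ℕ):ℝ) + c = ((k:ℝ)+c) + 1 := by push_cast; ring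
    have hΓ2 : 0 < Real.Gamma ((k:ℝ) + c) := Real.Gamma_pos_of_pos (hkc k)
    simp only [hG_def]
    rw [h1, h2, Real.Gamma_add_one (ne_of_gt (hxpos k hk)),
      Real.Gamma_add_one (ne_of_gt (hkc k))]
    field_simp
  have hGstep : ∀ k : ℕ, 1 ≤ k → G (k+1) = G k * (((k:ℝ)+c-q) / ((k:ℝ)+c)) := by
    intro k hk
    have := hGrec k hk
    field_simp at this ⊢
    linarith [this]
  have hGle1 : ∀ k, 1 ≤ k → G k ≤ G 1 := by
    intro k hk
    induction k, hk using Nat.le_induction with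
    | base => exact le_rfl
    | succ k hk ih =>
        have h1 : G (k+1) ≤ G k := by
          rw [hGstep k hk]
          have hr : ((k:ℝ)+c-q) / ((k:ℝ)+c) ≤ 1 :=
            div_le_one_of_le₀ (by linarith) (hkc k).le
          calc G k * (((k:ℝ)+c-q) / ((k:ℝ)+c)) ≤ G k * 1 :=
              mul_le_mul_of_nonneg_left hr (hGpos k hk).le
            _ = G k := mul_one _
        exact h1.trans ih
  set CG : ℝ := max |G 0| (G 1) with hCG_def
  have hCG : ∀ k, |G k| ≤ CG := by
    intro k
    rcases Nat.eq_zero_or_pos k with h | h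
    · subst h; exact le_max_left _ _
    · rw [abs_of_pos (hGpos k h)]
      exact (hGle1 k h).trans (le_max_right _ _)
  have hCG0 : 0 ≤ CG := (abs_nonneg _).trans (hCG 0)
  -- measurability helpers
  have hKmeas : ∀ n, Measurable (K n) := fun n => (hEP.meas_K n).mono (F.le n) le_rfl
  have hBmeas : ∀ r n, Measurable (B r n) := fun r n => (hEP.meas_B r n).mono (F.le n) le_rfl
  have hfromNat : ∀ (φ : ℕ → ℝ), Measurable φ := fun φ => measurable_from_top
  have hint : ∀ (f : Ω → ℝ) (b : ℝ), Measurable f → (∀ᵐ ω ∂μ, |f ω| ≤ b) → Integrable f μ := by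
    intro f b hf hb
    exact (integrable_const b).mono' hf.aestronglyMeasurable
      (by filter_upwards [hb] with ω h using by simpa [Real.norm_eq_abs] using h)
  -- a.e. structural facts at a fixed time
  have hae : ∀ n, 1 ≤ n → ∀ᵐ ω ∂μ, 1 ≤ K n ω ∧ K n ω ≤ n ∧
      (∀ r ∈ Finset.Icc 1 n, B r n ω ≤ n) ∧
      ((K n ω : ℝ) = ∑ r ∈ Finset.Icc 1 n, (B r n ω : ℝ)) ∧
      ((n:ℝ) = ∑ r ∈ Finset.Icc 1 n, (r:ℝ) * (B r n ω : ℝ)) := by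
    intro n hn
    filter_upwards [hEP.sum_blocks n hn, hEP.sum_sizes n hn] with ω h1 h2
    have hKn : K n ω ≤ n := by
      calc K n ω = ∑ r ∈ Finset.Icc 1 n, B r n ω := h1
        _ ≤ ∑ r ∈ Finset.Icc 1 n, r * B r n ω := by
            apply Finset.sum_le_sum
            intro r hr
            have := (Finset.mem_Icc.1 hr).1
            exact Nat.le_mul_of_pos_left _ (by omega)
        _ = n := h2.symm
    have hK1 : 1 ≤ K n ω := by
      rcases Nat.eq_zero_or_pos (K n ω) with hK | hK
      · exfalso
        have h1' : (0:ℕ) = ∑ r ∈ Finset.Icc 1 n, B r n ω := by rw [← hK]; exact h1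
        have hz : ∀ r ∈ Finset.Icc 1 n, B r n ω = 0 := Finset.sum_eq_zero_iff.1 h1'.symm
        have hz2 : ∑ r ∈ Finset.Icc 1 n, r * B r n ω = 0 :=
          Finset.sum_eq_zero (fun r hr => by rw [hz r hr, mul_zero])
        omega
      · exact hK
    have hB : ∀ r ∈ Finset.Icc 1 n, B r n ω ≤ n := by
      intro r hr
      have h1r : 1 ≤ r := (Finset.mem_Icc.1 hr).1
      have hrB : r * B r n ω ≤ ∑ i ∈ Finset.Icc 1 n, i * B i n ω :=
        Finset.single_le_sum (f := fun i => i * B i n ω) (fun i _ => Nat.zero_le _) hr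
      calc B r n ω ≤ r * B r n ω := Nat.le_mul_of_pos_left _ (by omega)
        _ ≤ ∑ i ∈ Finset.Icc 1 n, i * B i n ω := hrB
        _ = n := h2.symm
    refine ⟨hK1, hKn, hB, ?_, ?_⟩
    · have := congrArg (Nat.cast (R := ℝ)) h1
      push_cast at this
      exact this
    · have := congrArg (Nat.cast (R := ℝ)) h2
      push_cast at this
      exact this
  -- indicator helper
  set ind : Set Ω → Ω → ℝ := fun S => S.indicator (fun _ => (1:ℝ)) with hind_def
  have hindmem : ∀ (S : Set Ω) ω, ω ∈ S → ind S ω = 1 := by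
    intro S ω h; simp [hind_def, Set.indicator_of_mem h]
  have hindnot : ∀ (S : Set Ω) ω, ω ∉ S → ind S ω = 0 := by
    intro S ω h; simp [hind_def, Set.indicator_of_notMem h]
  have hind01 : ∀ (S : Set Ω) ω, 0 ≤ ind S ω ∧ ind S ω ≤ 1 := by
    intro S ω
    by_cases h : ω ∈ S
    · rw [hindmem S ω h]; norm_num
    · rw [hindnot S ω h]; norm_num
  have hindabs : ∀ (S : Set Ω) ω, |ind S ω| ≤ 1 := by
    intro S ω
    rw [abs_of_nonneg (hind01 S ω).1]
    exact (hind01 S ω).2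
  have hindmeas : ∀ (S : Set Ω), MeasurableSet S → Measurable (ind S) := by
    intro S hS
    exact (measurable_const).indicator hS
  have hiInd : ∀ (S : Set Ω), MeasurableSet S → Integrable (ind S) μ := by
    intro S hS
    exact (integrable_const (1:ℝ)).indicator hS
  -- composition measurability helpers
  have hmcompR : ∀ (φ : ℕ → ℝ) (f : Ω → ℕ), Measurable f → Measurable (fun ω => φ (f ω)) :=
    fun φ f hf => measurable_from_top.comp hf
  have hmcompFn : ∀ (φ : ℕ → ℝ) (m : ℕ), Measurable[F m] (fun ω => φ (K m ω)) :=
    fun φ m => measurable_from_top.comp (hEP.meas_K m)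
  -- the key one-step recursion
  have key : ∀ n, 1 ≤ n → ∫ ω, G (K (n+1) ω) ∂μ
      = (1 - α*q/((n:ℝ)+θ)) * ∫ ω, G (K n ω) ∂μ := by
    intro n hn
    have hnθ : 0 < (n:ℝ) + θ := by positivity
    have hnθ' : ((n:ℝ) + θ) ≠ 0 := ne_of_gt hnθ
    set An : Set Ω := {ω | K (n+1) ω = K n ω + 1 ∧ B 1 (n+1) ω = B 1 n ω + 1 ∧
        ∀ s, 2 ≤ s → B s (n+1) ω = B s n ω} with hAn_def
    set Gr : ℕ → Set Ω := fun r => {ω | K (n+1) ω = K n ω ∧ B r (n+1) ω + 1 = B r n ω ∧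
        B (r+1) (n+1) ω = B (r+1) n ω + 1 ∧
        ∀ s, 1 ≤ s → s ≠ r → s ≠ r + 1 → B s (n+1) ω = B s n ω} with hGr_def
    have hnew' : μ[ind An | F n] =ᵐ[μ] fun ω => (α * (K n ω : ℝ) + θ) / ((n : ℝ) + θ) :=
      hEP.trans_new n hn
    have hgrow' : ∀ r, 1 ≤ r → (μ[ind (Gr r) | F n]
        =ᵐ[μ] fun ω => (((r : ℝ) - α) * (B r n ω : ℝ)) / ((n : ℝ) + θ)) :=
      fun r hr => hEP.trans_grow n hn r hr
    have hAn_meas : MeasurableSet An := by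
      have e : An = ({ω | K (n+1) ω = K n ω + 1} ∩ ({ω | B 1 (n+1) ω = B 1 n ω + 1} ∩
          ⋂ s, ⋂ (_ : 2 ≤ s), {ω | B s (n+1) ω = B s n ω})) := by
        ext ω
        simp only [hAn_def, Set.mem_inter_iff, Set.mem_iInter, Set.mem_setOf_eq]
      rw [e]
      exact (measurableSet_eq_fun (hKmeas (n+1))
          ((hKmeas n).add measurable_const)).inter
        ((measurableSet_eq_fun (hBmeas 1 (n+1))
            ((hBmeas 1 n).add measurable_const)).inter
          (MeasurableSet.iInter fun s => MeasurableSet.iInter fun _ =>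
            measurableSet_eq_fun (hBmeas s (n+1)) (hBmeas s n)))
    have hGr_meas : ∀ r, MeasurableSet (Gr r) := by
      intro r
      have e : Gr r = ({ω | K (n+1) ω = K n ω} ∩ ({ω | B r (n+1) ω + 1 = B r n ω} ∩
          ({ω | B (r+1) (n+1) ω = B (r+1) n ω + 1} ∩
          ⋂ s, ⋂ (_ : 1 ≤ s), ⋂ (_ : s ≠ r), ⋂ (_ : s ≠ r+1),
            {ω | B s (n+1) ω = B s n ω}))) := by
        ext ω
        simp only [hGr_def, Set.mem_inter_iff, Set.mem_iInter, Set.mem_setOf_eq]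
      rw [e]
      exact (measurableSet_eq_fun (hKmeas (n+1)) (hKmeas n)).inter
        ((measurableSet_eq_fun ((hBmeas r (n+1)).add measurable_const)
            (hBmeas r n)).inter
          ((measurableSet_eq_fun (hBmeas (r+1) (n+1))
              ((hBmeas (r+1) n).add measurable_const)).inter
            (MeasurableSet.iInter fun s => MeasurableSet.iInter fun _ =>
              MeasurableSet.iInter fun _ => MeasurableSet.iInter fun _ =>
                measurableSet_eq_fun (hBmeas s (n+1)) (hBmeas s n))))
    -- pairwise disjointness (pointwise)
    have hdAG : ∀ r, 1 ≤ r → ∀ ω, ω ∈ An → ω ∉ Gr r := by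
      intro r hr ω hA hG
      simp only [hAn_def, Set.mem_setOf_eq] at hA
      simp only [hGr_def, Set.mem_setOf_eq] at hG
      rcases Nat.lt_or_ge r 2 with h2 | h2
      · have hr1 : r = 1 := by omega
        subst hr1
        have e1 := hA.2.1
        have e2 := hG.2.1
        omega
      · have e1 := hA.2.2 r h2
        have e2 := hG.2.1
        omega
    have hdGG : ∀ r r', 1 ≤ r → r ≠ r' → ∀ ω, ω ∈ Gr r → ω ∉ Gr r' := by
      intro r r' hr hne ω h h'
      simp only [hGr_def, Set.mem_setOf_eq] at h h'
      rcases eq_or_ne r (r'+1) with he | he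
      · have e1 := h'.2.2.1
        have e2 := h.2.1
        rw [← he] at e1
        omega
      · have e1 := h'.2.2.2 r hr hne he
        have e2 := h.2.1
        omega
    -- the sum of indicators
    have hSnn : ∀ ω, 0 ≤ ind An ω + ∑ r ∈ Finset.Icc 1 n, ind (Gr r) ω := fun ω =>
      add_nonneg (hind01 An ω).1 (Finset.sum_nonneg fun r _ => (hind01 (Gr r) ω).1)
    have hSumnn : ∀ ω, 0 ≤ ∑ r ∈ Finset.Icc 1 n, ind (Gr r) ω := fun ω =>
      Finset.sum_nonneg fun r _ => (hind01 (Gr r) ω).1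
    have hSle : ∀ ω, ind An ω + ∑ r ∈ Finset.Icc 1 n, ind (Gr r) ω ≤ 1 := by
      intro ω
      by_cases hA : ω ∈ An
      · have hsum : ∑ r ∈ Finset.Icc 1 n, ind (Gr r) ω = 0 :=
          Finset.sum_eq_zero fun r hr =>
            hindnot _ _ (hdAG r (Finset.mem_Icc.1 hr).1 ω hA)
        rw [hsum, hindmem _ _ hA]
        norm_num
      · rw [hindnot _ _ hA, zero_add]
        by_cases hE : ∃ r₀ ∈ Finset.Icc 1 n, ω ∈ Gr r₀
        · obtain ⟨r₀, hr₀, hmem⟩ := hE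
          have hsum : ∑ r ∈ Finset.Icc 1 n, ind (Gr r) ω = 1 := by
            rw [Finset.sum_eq_single_of_mem r₀ hr₀ ?_]
            · exact hindmem _ _ hmem
            · intro r hr hner
              exact hindnot _ _ (fun hmr =>
                (hdGG r r₀ (Finset.mem_Icc.1 hr).1 hner ω hmr) hmem)
          rw [hsum]
        · push_neg at hE
          have hsum : ∑ r ∈ Finset.Icc 1 n, ind (Gr r) ω = 0 :=
            Finset.sum_eq_zero fun r hr => hindnot _ _ (hE r hr)
          rw [hsum]
          norm_num
    have hSumle : ∀ ω, ∑ r ∈ Finset.Icc 1 n, ind (Gr r) ω ≤ 1 := by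
      intro ω
      have := hSle ω
      have := (hind01 An ω).1
      linarith
    -- integrability of the closed-form drifts
    have hintA : Integrable (fun ω => (α * (K n ω:ℝ) + θ)/((n:ℝ)+θ)) μ := by
      apply hint _ ((α*(n:ℝ)+θ)/((n:ℝ)+θ)) (hmcompR (fun k => (α*(k:ℝ)+θ)/((n:ℝ)+θ)) _ (hKmeas n))
      filter_upwards [hae n hn] with ω h
      obtain ⟨hK1, hKn, -, -, -⟩ := h
      have h1 : (K n ω : ℝ) ≤ (n:ℝ) := by exact_mod_cast hKn
      have h0 : (0:ℝ) ≤ (K n ω:ℝ) := Nat.cast_nonneg _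
      rw [abs_div, abs_of_pos hnθ, abs_of_nonneg (by positivity)]
      gcongr
    have hintGr : ∀ r ∈ Finset.Icc 1 n,
        Integrable (fun ω => ((r:ℝ) - α) * (B r n ω:ℝ)/((n:ℝ)+θ)) μ := by
      intro r hr
      have hr1 : 1 ≤ r := (Finset.mem_Icc.1 hr).1
      have hrn : r ≤ n := (Finset.mem_Icc.1 hr).2
      apply hint _ ((n:ℝ)*(n:ℝ)/((n:ℝ)+θ))
        (hmcompR (fun b => ((r:ℝ) - α) * (b:ℝ)/((n:ℝ)+θ)) _ (hBmeas r n))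
      filter_upwards [hae n hn] with ω h
      obtain ⟨-, -, hB, -, -⟩ := h
      have hBr : (B r n ω : ℝ) ≤ (n:ℝ) := by exact_mod_cast hB r hr
      have hBr0 : (0:ℝ) ≤ (B r n ω:ℝ) := Nat.cast_nonneg _
      have hrR : (1:ℝ) ≤ (r:ℝ) := by exact_mod_cast hr1
      have hrRn : (r:ℝ) ≤ (n:ℝ) := by exact_mod_cast hrn
      have hra : |(r:ℝ) - α| ≤ (n:ℝ) := by
        rw [abs_of_nonneg (by linarith)]
        linarith
      have habs : |((r:ℝ) - α) * (B r n ω:ℝ)/((n:ℝ)+θ)|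
          = |(r:ℝ) - α| * (B r n ω:ℝ)/((n:ℝ)+θ) := by
        rw [abs_div, abs_of_pos hnθ, abs_mul, abs_of_nonneg hBr0]
      rw [habs]
      gcongr
    -- integral of each indicator equals integral of its drift
    have hIA : ∫ ω, ind An ω ∂μ = ∫ ω, (α * (K n ω:ℝ) + θ)/((n:ℝ)+θ) ∂μ := by
      calc ∫ ω, ind An ω ∂μ = ∫ ω, (μ[ind An|F n]) ω ∂μ := (integral_condExp (F.le n)).symm
        _ = _ := integral_congr_ae hnew'
    have hIG : ∀ r ∈ Finset.Icc 1 n, ∫ ω, ind (Gr r) ω ∂μ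
        = ∫ ω, ((r:ℝ) - α) * (B r n ω:ℝ)/((n:ℝ)+θ) ∂μ := by
      intro r hr
      calc ∫ ω, ind (Gr r) ω ∂μ = ∫ ω, (μ[ind (Gr r)|F n]) ω ∂μ :=
            (integral_condExp (F.le n)).symm
        _ = _ := integral_congr_ae (hgrow' r (Finset.mem_Icc.1 hr).1)
    -- total mass one
    have hSint : ∫ ω, (ind An ω + ∑ r ∈ Finset.Icc 1 n, ind (Gr r) ω) ∂μ = 1 := by
      rw [integral_add (hiInd An hAn_meas)
        (integrable_finset_sum _ fun r hr => hiInd _ (hGr_meas r)),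
        integral_finset_sum _ (fun r hr => hiInd _ (hGr_meas r)), hIA,
        Finset.sum_congr rfl hIG,
        ← integral_finset_sum _ hintGr,
        ← integral_add hintA (integrable_finset_sum _ hintGr)]
      have heq : (fun ω => (α * (K n ω:ℝ) + θ)/((n:ℝ)+θ)
          + ∑ r ∈ Finset.Icc 1 n, ((r:ℝ) - α) * (B r n ω:ℝ)/((n:ℝ)+θ)) =ᵐ[μ]
          fun _ => (1:ℝ) := by
        filter_upwards [hae n hn] with ω h
        obtain ⟨hK1, hKn, hB, hs1, hs2⟩ := h
        have hsum : ∑ r ∈ Finset.Icc 1 n, ((r:ℝ) - α) * (B r n ω:ℝ)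
            = (n:ℝ) - α * (K n ω:ℝ) := by
          have e : ∑ r ∈ Finset.Icc 1 n, ((r:ℝ) - α) * (B r n ω:ℝ)
              = (∑ r ∈ Finset.Icc 1 n, (r:ℝ) * (B r n ω:ℝ))
                - α * ∑ r ∈ Finset.Icc 1 n, (B r n ω:ℝ) := by
            rw [Finset.mul_sum, ← Finset.sum_sub_distrib]
            exact Finset.sum_congr rfl fun r _ => by ring
          rw [e, ← hs1, ← hs2]
        rw [← Finset.sum_div, hsum]
        field_simp
        ring
      rw [integral_congr_ae heq]
      simp
    -- a.e. the chain moves by one of the transitions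
    have h1m : ∀ᵐ ω ∂μ, ind An ω + ∑ r ∈ Finset.Icc 1 n, ind (Gr r) ω = 1 := by
      have hSi : Integrable (fun ω => ind An ω + ∑ r ∈ Finset.Icc 1 n, ind (Gr r) ω) μ :=
        (hiInd An hAn_meas).add (integrable_finset_sum _ fun r hr => hiInd _ (hGr_meas r))
      have h0 : ∫ ω, (1 - (ind An ω + ∑ r ∈ Finset.Icc 1 n, ind (Gr r) ω)) ∂μ = 0 := by
        rw [integral_sub (integrable_const 1) hSi, hSint]
        simp
      have hnn : 0 ≤ᵐ[μ] fun ω => 1 - (ind An ω + ∑ r ∈ Finset.Icc 1 n, ind (Gr r) ω) := by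
        refine ae_of_all _ fun ω => ?_
        simp only [Pi.zero_apply]
        linarith [hSle ω]
      have hz := (integral_eq_zero_iff_of_nonneg_ae hnn
        ((integrable_const 1).sub hSi)).1 h0
      filter_upwards [hz] with ω hω
      have : 1 - (ind An ω + ∑ r ∈ Finset.Icc 1 n, ind (Gr r) ω) = 0 := hω
      linarith
    -- decomposition of G (K (n+1))
    have hdec : (fun ω => G (K (n+1) ω)) =ᵐ[μ]
        fun ω => G (K n ω + 1) * ind An ω
          + ∑ r ∈ Finset.Icc 1 n, G (K n ω) * ind (Gr r) ω := by
      filter_upwards [h1m] with ω hω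
      by_cases hA : ω ∈ An
      · have hsum : ∑ r ∈ Finset.Icc 1 n, ind (Gr r) ω = 0 :=
          Finset.sum_eq_zero fun r hr =>
            hindnot _ _ (hdAG r (Finset.mem_Icc.1 hr).1 ω hA)
        have hK : K (n+1) ω = K n ω + 1 := by
          have := hA
          simp only [hAn_def, Set.mem_setOf_eq] at this
          exact this.1
        have hsum2 : ∑ r ∈ Finset.Icc 1 n, G (K n ω) * ind (Gr r) ω = 0 := by
          rw [← Finset.mul_sum, hsum, mul_zero]
        rw [hK, hindmem _ _ hA, hsum2]
        ring
      · have hA0 : ind An ω = 0 := hindnot _ _ hA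
        have hsum : ∑ r ∈ Finset.Icc 1 n, ind (Gr r) ω = 1 := by
          rw [hA0, zero_add] at hω
          exact hω
        have hex : ∃ r₀ ∈ Finset.Icc 1 n, ω ∈ Gr r₀ := by
          by_contra hE
          push_neg at hE
          have : ∑ r ∈ Finset.Icc 1 n, ind (Gr r) ω = 0 :=
            Finset.sum_eq_zero fun r hr => hindnot _ _ (hE r hr)
          rw [this] at hsum
          norm_num at hsum
        obtain ⟨r₀, hr₀, hmem⟩ := hex
        have hK : K (n+1) ω = K n ω := by
          have := hmem
          simp only [hGr_def, Set.mem_setOf_eq] at this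
          exact this.1
        rw [hK, hA0, ← Finset.mul_sum, hsum]
        ring
    -- the pull-out identity
    have hpull : ∀ (S : Set Ω) (h g : Ω → ℝ), MeasurableSet S →
        Measurable[F n] h → (∀ ω, |h ω| ≤ CG) →
        (μ[ind S|F n] =ᵐ[μ] g) →
        ∫ ω, h ω * ind S ω ∂μ = ∫ ω, h ω * g ω ∂μ := by
      intro S h g hS hh hb hce
      have hiS : Integrable (ind S) μ := hiInd S hS
      have hmul : Integrable (fun ω => h ω * ind S ω) μ := by
        apply hint _ CG ((hh.mono (F.le n) le_rfl).mul (hindmeas S hS))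
        refine ae_of_all _ fun ω => ?_
        simp only [Pi.mul_apply]
        rw [abs_mul]
        calc |h ω| * |ind S ω| ≤ CG * 1 :=
            mul_le_mul (hb ω) (hindabs S ω) (abs_nonneg _) hCG0
          _ = CG := mul_one _
      have h2 : μ[fun ω => h ω * ind S ω|F n] =ᵐ[μ]
          fun ω => h ω * (μ[ind S|F n]) ω :=
        condExp_mul_of_stronglyMeasurable_left hh.stronglyMeasurable hmul hiS
      calc ∫ ω, h ω * ind S ω ∂μ
          = ∫ ω, (μ[fun ω => h ω * ind S ω|F n]) ω ∂μ := (integral_condExp (F.le n)).symm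
        _ = ∫ ω, h ω * (μ[ind S|F n]) ω ∂μ := integral_congr_ae h2
        _ = ∫ ω, h ω * g ω ∂μ := by
            apply integral_congr_ae
            filter_upwards [hce] with ω hω
            rw [hω]
    -- integrability of the product terms
    have hCG1 : ∀ ω, |G (K n ω + 1)| ≤ CG := fun ω => hCG _
    have hCG2 : ∀ ω, |G (K n ω)| ≤ CG := fun ω => hCG _
    have hprod1_int : Integrable (fun ω => G (K n ω + 1) * ((α * (K n ω:ℝ) + θ)/((n:ℝ)+θ))) μ := by
      apply hint _ (CG * ((α*(n:ℝ)+θ)/((n:ℝ)+θ)))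
        (hmcompR (fun k => G (k+1) * ((α*(k:ℝ)+θ)/((n:ℝ)+θ))) _ (hKmeas n))
      filter_upwards [hae n hn] with ω h
      obtain ⟨hK1, hKn, -, -, -⟩ := h
      have h1 : (K n ω : ℝ) ≤ (n:ℝ) := by exact_mod_cast hKn
      have h0 : (0:ℝ) ≤ (K n ω:ℝ) := Nat.cast_nonneg _
      have habs : |G (K n ω + 1) * ((α * (K n ω:ℝ) + θ)/((n:ℝ)+θ))|
          = |G (K n ω + 1)| * ((α * (K n ω:ℝ) + θ)/((n:ℝ)+θ)) := by
        rw [abs_mul, abs_of_nonneg (show (0:ℝ) ≤ (α * (K n ω:ℝ) + θ)/((n:ℝ)+θ) by positivity)]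
      rw [habs]
      apply mul_le_mul (hCG1 ω) _ (by positivity) hCG0
      gcongr
    have hprod2_int : ∀ r ∈ Finset.Icc 1 n,
        Integrable (fun ω => G (K n ω) * (((r:ℝ) - α) * (B r n ω:ℝ)/((n:ℝ)+θ))) μ := by
      intro r hr
      have hr1 : 1 ≤ r := (Finset.mem_Icc.1 hr).1
      have hrn : r ≤ n := (Finset.mem_Icc.1 hr).2
      have hm : Measurable (fun ω => G (K n ω) * (((r:ℝ) - α) * (B r n ω:ℝ)/((n:ℝ)+θ))) := by
        exact (hmcompR G _ (hKmeas n)).mul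
          (hmcompR (fun b => ((r:ℝ) - α) * (b:ℝ)/((n:ℝ)+θ)) _ (hBmeas r n))
      apply hint _ (CG * ((n:ℝ)*(n:ℝ)/((n:ℝ)+θ))) hm
      filter_upwards [hae n hn] with ω h
      obtain ⟨-, -, hB, -, -⟩ := h
      have hBr : (B r n ω : ℝ) ≤ (n:ℝ) := by exact_mod_cast hB r hr
      have hBr0 : (0:ℝ) ≤ (B r n ω:ℝ) := Nat.cast_nonneg _
      have hrR : (1:ℝ) ≤ (r:ℝ) := by exact_mod_cast hr1
      have hrRn : (r:ℝ) ≤ (n:ℝ) := by exact_mod_cast hrn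
      have hra : |(r:ℝ) - α| ≤ (n:ℝ) := by
        rw [abs_of_nonneg (by linarith)]
        linarith
      have habs : |G (K n ω) * (((r:ℝ) - α) * (B r n ω:ℝ)/((n:ℝ)+θ))|
          = |G (K n ω)| * (|(r:ℝ) - α| * (B r n ω:ℝ)/((n:ℝ)+θ)) := by
        rw [abs_mul]
        congr 1
        rw [abs_div, abs_of_pos hnθ, abs_mul, abs_of_nonneg hBr0]
      rw [habs]
      apply mul_le_mul (hCG2 ω) _ (by positivity) hCG0
      gcongr
    have hi1 : Integrable (fun ω => G (K n ω + 1) * ind An ω) μ := by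
      apply hint _ CG ((hmcompR (fun k => G (k+1)) _ (hKmeas n)).mul (hindmeas _ hAn_meas))
      refine ae_of_all _ fun ω => ?_
      simp only [Pi.mul_apply]
      rw [abs_mul]
      calc |G (K n ω + 1)| * |ind An ω| ≤ CG * 1 :=
          mul_le_mul (hCG1 ω) (hindabs _ ω) (abs_nonneg _) hCG0
        _ = CG := mul_one _
    have hi2 : ∀ r ∈ Finset.Icc 1 n, Integrable (fun ω => G (K n ω) * ind (Gr r) ω) μ := by
      intro r hr
      apply hint _ CG ((hmcompR G _ (hKmeas n)).mul (hindmeas _ (hGr_meas r)))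
      refine ae_of_all _ fun ω => ?_
      simp only [Pi.mul_apply]
      rw [abs_mul]
      calc |G (K n ω)| * |ind (Gr r) ω| ≤ CG * 1 :=
          mul_le_mul (hCG2 ω) (hindabs _ ω) (abs_nonneg _) hCG0
        _ = CG := mul_one _
    have hi3 : Integrable (fun ω => ∑ r ∈ Finset.Icc 1 n, G (K n ω) * ind (Gr r) ω) μ :=
      integrable_finset_sum _ hi2
    -- putting everything together
    calc ∫ ω, G (K (n+1) ω) ∂μ
        = ∫ ω, (G (K n ω + 1) * ind An ω
            + ∑ r ∈ Finset.Icc 1 n, G (K n ω) * ind (Gr r) ω) ∂μ := integral_congr_ae hdec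
      _ = ∫ ω, G (K n ω + 1) * ind An ω ∂μ
            + ∑ r ∈ Finset.Icc 1 n, ∫ ω, G (K n ω) * ind (Gr r) ω ∂μ := by
          rw [integral_add hi1 hi3, integral_finset_sum _ hi2]
      _ = ∫ ω, G (K n ω + 1) * ((α * (K n ω:ℝ) + θ)/((n:ℝ)+θ)) ∂μ
            + ∑ r ∈ Finset.Icc 1 n,
              ∫ ω, G (K n ω) * (((r:ℝ) - α) * (B r n ω:ℝ)/((n:ℝ)+θ)) ∂μ := by
          congr 1
          · exact hpull An _ _ hAn_meas (hmcompFn (fun k => G (k+1)) n) hCG1 hnew'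
          · apply Finset.sum_congr rfl
            intro r hr
            exact hpull (Gr r) _ _ (hGr_meas r) (hmcompFn G n) hCG2
              (hgrow' r (Finset.mem_Icc.1 hr).1)
      _ = ∫ ω, (G (K n ω + 1) * ((α * (K n ω:ℝ) + θ)/((n:ℝ)+θ))
            + ∑ r ∈ Finset.Icc 1 n,
              G (K n ω) * (((r:ℝ) - α) * (B r n ω:ℝ)/((n:ℝ)+θ))) ∂μ := by
          rw [integral_add hprod1_int (integrable_finset_sum _ hprod2_int),
            integral_finset_sum _ hprod2_int]
      _ = ∫ ω, G (K n ω) * (1 - α*q/((n:ℝ)+θ)) ∂μ := by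
          apply integral_congr_ae
          filter_upwards [hae n hn] with ω h
          obtain ⟨hK1, hKn, hB, hs1, hs2⟩ := h
          have e1 := hGrec (K n ω) hK1
          have hsum : ∑ r ∈ Finset.Icc 1 n,
              G (K n ω) * (((r:ℝ) - α) * (B r n ω:ℝ)/((n:ℝ)+θ))
              = G (K n ω) * (((n:ℝ) - α * (K n ω:ℝ))/((n:ℝ)+θ)) := by
            rw [← Finset.mul_sum]
            congr 1
            rw [← Finset.sum_div]
            congr 1
            have e : ∑ r ∈ Finset.Icc 1 n, ((r:ℝ) - α) * (B r n ω:ℝ)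
                = (∑ r ∈ Finset.Icc 1 n, (r:ℝ) * (B r n ω:ℝ))
                  - α * ∑ r ∈ Finset.Icc 1 n, (B r n ω:ℝ) := by
              rw [Finset.mul_sum, ← Finset.sum_sub_distrib]
              exact Finset.sum_congr rfl fun r _ => by ring
            rw [e, ← hs1, ← hs2]
          rw [hsum]
          have e2 : G (K n ω + 1) * (α*(K n ω:ℝ)+θ)
              = α * (G (K n ω) * ((K n ω:ℝ)+c-q)) := by
            rw [show α*(K n ω:ℝ)+θ = α*((K n ω:ℝ)+c) by rw [mul_add, hαc]]
            rw [show G (K n ω + 1) * (α * ((K n ω:ℝ) + c)) =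
              α * (G (K n ω + 1) * ((K n ω:ℝ)+c)) by ring, e1]
          have lhs_eq : G (K n ω + 1) * ((α*(K n ω:ℝ)+θ)/((n:ℝ)+θ))
              + G (K n ω) * (((n:ℝ) - α*(K n ω:ℝ))/((n:ℝ)+θ))
              = (G (K n ω + 1) * (α*(K n ω:ℝ)+θ)
                + G (K n ω) * ((n:ℝ) - α*(K n ω:ℝ)))/((n:ℝ)+θ) := by
            field_simp
          have rhs_eq : G (K n ω) * (1 - α*q/((n:ℝ)+θ))
              = (G (K n ω) * (((n:ℝ)+θ) - α*q))/((n:ℝ)+θ) := by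
            field_simp
          have hnum : G (K n ω + 1) * (α*(K n ω:ℝ)+θ)
              + G (K n ω) * ((n:ℝ) - α*(K n ω:ℝ))
              = G (K n ω) * (((n:ℝ)+θ) - α*q) := by
            linear_combination e2 + G (K n ω) * hαc
          rw [lhs_eq, rhs_eq, hnum]
      _ = (1 - α*q/((n:ℝ)+θ)) * ∫ ω, G (K n ω) ∂μ := by
          rw [integral_mul_const]
          ring
  -- expectation at time 1
  have hE1 : ∫ ω, G (K 1 ω) ∂μ = G 1 := by
    have he : (fun ω => G (K 1 ω)) =ᵐ[μ] fun _ => G 1 := by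
      filter_upwards [hEP.init_K] with ω h
      rw [h]
    rw [integral_congr_ae he]; simp
  -- explicit expectation formula
  have hEn : ∀ m : ℕ, ∫ ω, G (K (m+1) ω) ∂μ
      = G 1 * ∏ j ∈ Finset.range m, (1 - α*q/((j:ℝ)+1+θ)) := by
    intro m
    induction m with
    | zero => simpa using hE1
    | succ m ih =>
        have hstep := key (m+1) (by omega)
        have hc1 : (((m+1:ℕ)):ℝ) + θ = (m:ℝ)+1+θ := by push_cast; ring
        rw [hstep, ih, Finset.prod_range_succ, hc1]
        ring
  -- elementary factor bound
  have hfac : ∀ x : ℝ, 0 < x → 1 - α*q/x ≤ (x/(x+1))^(α*q) := by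
    intro x hx
    have hx1 : (0:ℝ) < x + 1 := by linarith
    have hlog : Real.log (x+1) - Real.log x ≤ 1/x := by
      rw [← Real.log_div (ne_of_gt hx1) (ne_of_gt hx)]
      have h1 := Real.log_le_sub_one_of_pos (show (0:ℝ) < (x+1)/x from div_pos hx1 hx)
      calc Real.log ((x+1)/x) ≤ (x+1)/x - 1 := h1
        _ = 1/x := by field_simp; ring
    calc 1 - α*q/x = 1 + (-(α*q/x)) := by ring
      _ ≤ Real.exp (-(α*q/x)) := by
          have := Real.add_one_le_exp (-(α*q/x))
          linarith
      _ ≤ Real.exp ((Real.log x - Real.log (x+1)) * (α*q)) := by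
          apply Real.exp_le_exp.2
          have h2 : (α*q) * (Real.log (x+1) - Real.log x) ≤ (α*q) * (1/x) :=
            mul_le_mul_of_nonneg_left hlog hβ.le
          have h3 : (α*q) * (1/x) = α*q/x := by ring
          nlinarith
      _ = (x/(x+1))^(α*q) := by
          rw [Real.rpow_def_of_pos (div_pos hx hx1),
            Real.log_div (ne_of_gt hx) (ne_of_gt hx1)]
  -- product bound
  have hprodnn : ∀ m : ℕ, (0:ℝ) < (m:ℝ)+1+θ := by
    intro m; positivity
  have hfacnn : ∀ m : ℕ, (0:ℝ) ≤ 1 - α*q/((m:ℝ)+1+θ) := by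
    intro m
    have h1 : α*q/((m:ℝ)+1+θ) ≤ 1 := by
      rw [div_le_one (hprodnn m)]
      have : (0:ℝ) ≤ (m:ℝ) := Nat.cast_nonneg _
      linarith
    linarith
  have hprod : ∀ m : ℕ, ∏ j ∈ Finset.range m, (1 - α*q/((j:ℝ)+1+θ))
      ≤ ((1+θ)/((m:ℝ)+1+θ))^(α*q) := by
    intro m
    induction m with
    | zero =>
        simp only [Finset.range_zero, Finset.prod_empty, Nat.cast_zero, zero_add]
        rw [div_self (by positivity : (1:ℝ)+θ ≠ 0), Real.one_rpow]
    | succ m ih =>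
        rw [Finset.prod_range_succ]
        have hx : (0:ℝ) < (m:ℝ)+1+θ := hprodnn m
        have hf := hfac ((m:ℝ)+1+θ) hx
        have hmul : (∏ j ∈ Finset.range m, (1 - α*q/((j:ℝ)+1+θ))) * (1 - α*q/((m:ℝ)+1+θ))
            ≤ ((1+θ)/((m:ℝ)+1+θ))^(α*q) * ((((m:ℝ)+1+θ))/(((m:ℝ)+1+θ)+1))^(α*q) :=
          mul_le_mul ih hf (hfacnn m) (Real.rpow_nonneg (by positivity) _)
        calc (∏ j ∈ Finset.range m, (1 - α*q/((j:ℝ)+1+θ))) * (1 - α*q/((m:ℝ)+1+θ))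
            ≤ ((1+θ)/((m:ℝ)+1+θ))^(α*q) * ((((m:ℝ)+1+θ))/(((m:ℝ)+1+θ)+1))^(α*q) := hmul
          _ = (((1+θ)/((m:ℝ)+1+θ)) * ((((m:ℝ)+1+θ))/(((m:ℝ)+1+θ)+1)))^(α*q) :=
              (Real.mul_rpow (by positivity) (by positivity)).symm
          _ = ((1+θ)/(((m+1:ℕ):ℝ)+1+θ))^(α*q) := by
              congr 1
              have h1 : ((m:ℝ)+1+θ) ≠ 0 := ne_of_gt hx
              have h3 : (((m+1:ℕ):ℝ)+1+θ) = ((m:ℝ)+1+θ)+1 := by push_cast; ring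
              rw [h3, div_mul_div_comm, mul_comm ((1:ℝ)+θ) ((m:ℝ)+1+θ),
                mul_div_mul_left _ _ h1]
  -- Gautschi-type comparison
  have hGq : ∀ k : ℕ, 1 ≤ k → ((k:ℝ)) ^ (-q) ≤ (1+c)^q * G k := by
    intro k hk
    have hk1 : (1:ℝ) ≤ (k:ℝ) := by exact_mod_cast hk
    have hk0 : (0:ℝ) < (k:ℝ) := by linarith
    have hx : 0 < (k:ℝ) + c - q := hxpos k hk
    have hΓ := gamma_ratio_le ((k:ℝ)+c-q) q hx hq0.le
    have hxq : (k:ℝ)+c-q+q = (k:ℝ)+c := by ring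
    rw [hxq] at hΓ
    have hΓx : 0 < Real.Gamma ((k:ℝ)+c-q) := Real.Gamma_pos_of_pos hx
    have hΓkc : 0 < Real.Gamma ((k:ℝ)+c) := Real.Gamma_pos_of_pos (hkc k)
    have hpow : 0 < ((k:ℝ)+c)^q := Real.rpow_pos_of_pos (hkc k) q
    have h1 : ((k:ℝ)+c)^(-q) ≤ G k := by
      have hGkeq : G k = Real.Gamma ((k:ℝ)+c-q) / Real.Gamma ((k:ℝ)+c) := rfl
      rw [hGkeq, Real.rpow_neg (hkc k).le, le_div_iff₀ hΓkc]
      calc (((k:ℝ)+c)^q)⁻¹ * Real.Gamma ((k:ℝ)+c)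
          ≤ (((k:ℝ)+c)^q)⁻¹ * (Real.Gamma ((k:ℝ)+c-q) * ((k:ℝ)+c)^q) :=
            mul_le_mul_of_nonneg_left hΓ (inv_nonneg.2 hpow.le)
        _ = Real.Gamma ((k:ℝ)+c-q) := by field_simp
    have h2 : ((k:ℝ))^(-q) ≤ (1+c)^q * ((k:ℝ)+c)^(-q) := by
      have hbase : (k:ℝ)+c ≤ (1+c)*(k:ℝ) := by
        have hck : c * 1 ≤ c * (k:ℝ) := mul_le_mul_of_nonneg_left hk1 hc.le
        calc (k:ℝ)+c = (k:ℝ) + c*1 := by ring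
          _ ≤ (k:ℝ) + c*(k:ℝ) := by linarith
          _ = (1+c)*(k:ℝ) := by ring
      have h3 : ((k:ℝ)+c)^q ≤ ((1+c)*(k:ℝ))^q :=
        Real.rpow_le_rpow (hkc k).le hbase hq0.le
      rw [Real.mul_rpow (by linarith : (0:ℝ) ≤ 1+c) hk0.le] at h3
      have hkq : 0 < (k:ℝ)^q := Real.rpow_pos_of_pos hk0 q
      rw [Real.rpow_neg hk0.le, Real.rpow_neg (hkc k).le]
      rw [← one_div, ← one_div, mul_one_div, div_le_div_iff₀ hkq hpow]
      calc 1 * ((k:ℝ)+c)^q ≤ (1+c)^q * (k:ℝ)^q := by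
            rw [one_mul]; exact h3
        _ = (1+c)^q * (k:ℝ)^q := rfl
    calc ((k:ℝ))^(-q) ≤ (1+c)^q * ((k:ℝ)+c)^(-q) := h2
      _ ≤ (1+c)^q * G k := by
          apply mul_le_mul_of_nonneg_left h1 (Real.rpow_nonneg (by linarith) q)
  have hG1pos : 0 < G 1 := hGpos 1 le_rfl
  -- the uniform constant
  refine ⟨ENNReal.ofReal ((1+c)^q * G 1 * (1+θ)^(α*q)), ENNReal.ofReal_ne_top, ?_⟩
  intro n hn
  obtain ⟨m, rfl⟩ : ∃ m, n = m + 1 := ⟨n-1, by omega⟩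
  set N : ℝ := ((m+1:ℕ):ℝ) with hN_def
  have hN1 : (1:ℝ) ≤ N := by rw [hN_def]; exact_mod_cast hn
  have hN0 : (0:ℝ) < N := by linarith
  have hNα : (0:ℝ) < N^α := Real.rpow_pos_of_pos hN0 α
  set f : Ω → ℝ := fun ω => ((K (m+1) ω : ℝ) / N ^ α) ^ (-q) with hf_def
  have hfm : Measurable f := hmcompR (fun k => ((k:ℝ)/N^α)^(-q)) _ (hKmeas (m+1))
  have hfnn : ∀ ω, 0 ≤ f ω := fun ω =>
    Real.rpow_nonneg (div_nonneg (Nat.cast_nonneg _) hNα.le) _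
  have hfb : ∀ ω, |f ω| ≤ N^(α*q) := by
    intro ω
    rw [abs_of_nonneg (hfnn ω)]
    rcases Nat.eq_zero_or_pos (K (m+1) ω) with h0 | h1
    · rw [hf_def]
      simp only [h0, Nat.cast_zero, zero_div]
      rw [Real.zero_rpow (by linarith : -q ≠ 0)]
      positivity
    · have hk1 : (1:ℝ) ≤ (K (m+1) ω:ℝ) := by exact_mod_cast h1
      have hlow : 1/N^α ≤ (K (m+1) ω:ℝ)/N^α := by gcongr
      have := Real.rpow_le_rpow_of_nonpos (by positivity : (0:ℝ) < 1/N^α) hlow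
        (by linarith : -q ≤ 0)
      calc f ω ≤ (1/N^α)^(-q) := this
        _ = N^(α*q) := by
            rw [one_div, Real.inv_rpow hNα.le, Real.rpow_neg hNα.le q, inv_inv,
              ← Real.rpow_mul hN0.le]
  have hintf : Integrable f μ := hint f (N^(α*q)) hfm (ae_of_all _ hfb)
  -- comparison with G
  set D : ℝ := N^(α*q) * (1+c)^q with hD_def
  have hD0 : 0 ≤ D := by
    rw [hD_def]
    positivity
  have hcmp : f ≤ᵐ[μ] fun ω => D * G (K (m+1) ω) := by
    filter_upwards [hae (m+1) hn] with ω h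
    obtain ⟨hK1, -, -, -, -⟩ := h
    have hk0 : (0:ℝ) < (K (m+1) ω:ℝ) := by
      have h1k : (1:ℝ) ≤ (K (m+1) ω:ℝ) := by exact_mod_cast hK1
      linarith
    have hsplit : f ω = (K (m+1) ω:ℝ)^(-q) * N^(α*q) := by
      show ((K (m+1) ω:ℝ) / N ^ α) ^ (-q) = (K (m+1) ω:ℝ)^(-q) * N^(α*q)
      rw [Real.div_rpow (Nat.cast_nonneg _) hNα.le, Real.rpow_neg hNα.le q,
        div_inv_eq_mul, ← Real.rpow_mul hN0.le]
    rw [hsplit, hD_def]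
    calc (K (m+1) ω:ℝ)^(-q) * N^(α*q) ≤ ((1+c)^q * G (K (m+1) ω)) * N^(α*q) :=
        mul_le_mul_of_nonneg_right (hGq _ hK1) (Real.rpow_nonneg hN0.le _)
      _ = N^(α*q) * (1+c)^q * G (K (m+1) ω) := by ring
  have hintD : Integrable (fun ω => D * G (K (m+1) ω)) μ := by
    apply hint _ (D * CG) ((measurable_const).mul (hmcompR G _ (hKmeas (m+1))))
    refine ae_of_all _ fun ω => ?_
    simp only [Pi.mul_apply]
    rw [abs_mul, abs_of_nonneg hD0]
    exact mul_le_mul_of_nonneg_left (hCG _) hD0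
  -- the real bound
  have hbound : ∫ ω, f ω ∂μ ≤ (1+c)^q * G 1 * (1+θ)^(α*q) := by
    have h1 : ∫ ω, f ω ∂μ ≤ ∫ ω, D * G (K (m+1) ω) ∂μ :=
      integral_mono_ae hintf hintD hcmp
    have h2 : ∫ ω, D * G (K (m+1) ω) ∂μ = D * ∫ ω, G (K (m+1) ω) ∂μ :=
      integral_const_mul D _
    have h3 : D * ∫ ω, G (K (m+1) ω) ∂μ
        = D * (G 1 * ∏ j ∈ Finset.range m, (1 - α*q/((j:ℝ)+1+θ))) := by
      rw [hEn m]
    have h4 : D * (G 1 * ∏ j ∈ Finset.range m, (1 - α*q/((j:ℝ)+1+θ)))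
        ≤ D * (G 1 * ((1+θ)/((m:ℝ)+1+θ))^(α*q)) := by
      apply mul_le_mul_of_nonneg_left _ hD0
      exact mul_le_mul_of_nonneg_left (hprod m) hG1pos.le
    have h5 : D * (G 1 * ((1+θ)/((m:ℝ)+1+θ))^(α*q))
        ≤ (1+c)^q * G 1 * (1+θ)^(α*q) := by
      have hNm : N = (m:ℝ)+1 := by rw [hN_def]; push_cast; ring
      have hx : (0:ℝ) < (m:ℝ)+1+θ := by positivity
      have hbb : N * ((1+θ)/((m:ℝ)+1+θ)) ≤ 1+θ := by
        rw [hNm]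
        have hdd : ((m:ℝ)+1)/((m:ℝ)+1+θ) ≤ 1 := by
          rw [div_le_one hx]; linarith
        calc ((m:ℝ)+1) * ((1+θ)/((m:ℝ)+1+θ))
            = (((m:ℝ)+1)/((m:ℝ)+1+θ)) * (1+θ) := by ring
          _ ≤ 1 * (1+θ) := mul_le_mul_of_nonneg_right hdd (by positivity)
          _ = 1+θ := one_mul _
      have hNnn : (0:ℝ) ≤ N := by rw [hNm]; positivity
      have hkey : N^(α*q) * ((1+θ)/((m:ℝ)+1+θ))^(α*q) ≤ (1+θ)^(α*q) := by
        rw [← Real.mul_rpow hNnn (by positivity)]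
        exact Real.rpow_le_rpow (mul_nonneg hNnn (by positivity)) hbb hβ.le
      calc D * (G 1 * ((1+θ)/((m:ℝ)+1+θ))^(α*q))
          = ((1+c)^q * G 1) * (N^(α*q) * ((1+θ)/((m:ℝ)+1+θ))^(α*q)) := by
            rw [hD_def]; ring
        _ ≤ ((1+c)^q * G 1) * (1+θ)^(α*q) := by
            apply mul_le_mul_of_nonneg_left hkey
            positivity
        _ = (1+c)^q * G 1 * (1+θ)^(α*q) := by ring
    linarith [h1, h2 ▸ h1]
  -- conversion to lintegral
  have hconv : ∫⁻ ω, ENNReal.ofReal (f ω) ∂μ = ENNReal.ofReal (∫ ω, f ω ∂μ) :=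
    (MeasureTheory.ofReal_integral_eq_lintegral_ofReal hintf (ae_of_all _ hfnn)).symm
  calc ∫⁻ ω, ENNReal.ofReal (((K (m+1) ω : ℝ) / ((m+1:ℕ) : ℝ) ^ α) ^ (-q)) ∂μ
      = ∫⁻ ω, ENNReal.ofReal (f ω) ∂μ := rfl
    _ = ENNReal.ofReal (∫ ω, f ω ∂μ) := hconv
    _ ≤ ENNReal.ofReal ((1+c)^q * G 1 * (1+θ)^(α*q)) := ENNReal.ofReal_le_ofReal hbound

end
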